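/- The c_0-disjoint complement of c_{0,I} in ℓ∞ equals c_{0,I^⊥}; that is, {x ∈ ℓ∞ : |x| ∧ |y| ∈ c_0 for all y ∈ c_{0,I}} = c_{0,I^⊥}. -/

import Mathlib

open BoundedContinuousFunction Filter Topology

/-- The `c_0`-disjoint complement of `c_{0,I}` in `ℓ∞` equals `c_{0,I^⊥}`. -/
theorem c0_disjoint_complement_eq (I : Set (Set ℕ))
    (hdown : ∀ {A B : Set ℕ}, A ⊆ B → B ∈ I → A ∈ I)
    (hunion : ∀ {A B : Set ℕ}, A ∈ I → B ∈ I → A ∪ B ∈ I)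
    (hfin : ∀ A : Set ℕ, A.Finite → A ∈ I) :
    {x : ℕ →ᵇ ℝ | ∀ y : ℕ →ᵇ ℝ, (∀ ε > (0 : ℝ), {n | ε ≤ |y n|} ∈ I) →
        Tendsto (fun n => min |x n| |y n|) atTop (𝓝 0)} =
      {x : ℕ →ᵇ ℝ | ∀ ε > (0 : ℝ),
        {n | ε ≤ |x n|} ∈ {B : Set ℕ | ∀ A ∈ I, (A ∩ B).Finite}} := by
  classical
  ext x
  simp only [Set.mem_setOf_eq]
  constructor
  · intro hx ε hε A hA
    by_contra hinf
    set B : Set ℕ := A ∩ {n | ε ≤ |x n|} with hBdef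
    have hBinf : B.Infinite := hinf
    -- construct y = indicator of B
    set y : ℕ →ᵇ ℝ :=
      ⟨⟨fun n => if n ∈ B then 1 else 0, continuous_of_discreteTopology⟩, 2, by
        intro a b
        simp only [ContinuousMap.coe_mk]
        split_ifs <;> simp [Real.dist_eq] <;> norm_num⟩ with hydef
    have hy : ∀ δ > (0 : ℝ), {n | δ ≤ |y n|} ∈ I := by
      intro δ hδ
      have hsub : {n | δ ≤ |y n|} ⊆ B := by
        intro n hn
        simp only [Set.mem_setOf_eq] at hn
        have hyn : y n = if n ∈ B then 1 else 0 := rfl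
        by_contra hnB
        rw [hyn, if_neg hnB] at hn
        simp at hn
        linarith
      exact hdown (hsub.trans Set.inter_subset_left) hA
    have htend := hx y hy
    have hlow : ∀ n ∈ B, min ε 1 ≤ min |x n| |y n| := by
      intro n hn
      have h1 : ε ≤ |x n| := hn.2
      have h2 : |y n| = 1 := by
        have hyn : y n = if n ∈ B then 1 else 0 := rfl
        rw [hyn, if_pos hn]; norm_num
      rw [h2]
      exact min_le_min h1 le_rfl
    have hpos : (0 : ℝ) < min ε 1 := lt_min hε one_pos
    have hev := htend.eventually (eventually_lt_nhds hpos)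
    have hfreq : ∃ᶠ n in atTop, n ∈ B := by
      rw [Nat.frequently_atTop_iff_infinite]
      exact hBinf
    obtain ⟨n, hnB, hn⟩ := (hfreq.and_eventually hev).exists
    exact absurd (hlow n hnB) (not_le.mpr hn)
  · intro hx y hy
    rw [NormedAddCommGroup.tendsto_nhds_zero]
    intro ε hε
    have hS : ({n | ε ≤ |x n|} ∩ {n | ε ≤ |y n|}).Finite := by
      have := hx ε hε {n | ε ≤ |y n|} (hy ε hε)
      exact (Set.inter_comm _ _ ▸ this)
    have hev : ∀ᶠ n in atTop, n ∉ ({n | ε ≤ |x n|} ∩ {n | ε ≤ |y n|}) := by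
      rw [← Nat.cofinite_eq_atTop]
      exact Set.Finite.eventually_cofinite_notMem hS
    filter_upwards [hev] with n hn
    rw [Real.norm_eq_abs, abs_of_nonneg (le_min (abs_nonneg _) (abs_nonneg _))]
    by_contra h
    push_neg at h
    exact hn ⟨le_trans h (min_le_left _ _), le_trans h (min_le_right _ _)⟩
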